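/- Let P ⊂ ℝ^{n+1} be an open convex polyhedron (a finite intersection of open halfspaces) and let S^n be the unit sphere. If S^n \ P is connected but S^n \ closure(P) is disconnected, then there exists a point p ∈ closure(P) ∩ S^n at which the lower density of P ∩ S^n is zero, i.e. liminf_{r→0+} H^n(P ∩ S^n ∩ B(p,r)) / r^n = 0. -/

import Mathlib

open MeasureTheory Topology Filter
open scoped RealInnerProductSpace ENNReal NNReal

namespace PolySphere


variable {E : Type*} [NormedAddCommGroup E] [InnerProductSpace ℝ E]

/-- Lipschitz bound for `Real.sqrt` away from zero. -/
lemma abs_sqrt_sub_sqrt_le {x y : ℝ} (hx : 3/4 ≤ x) (hy : 3/4 ≤ y) :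
    |Real.sqrt x - Real.sqrt y| ≤ |x - y| := by
  have key : ∀ u v : ℝ, 3/4 ≤ u → 3/4 ≤ v → v ≤ u → Real.sqrt u - Real.sqrt v ≤ u - v := by
    intro u v hu hv hvu
    have hv0 : (0:ℝ) ≤ v := by linarith
    have h12 : (1/2 : ℝ) ≤ Real.sqrt v := by
      have : (1/2 : ℝ) = Real.sqrt (1/4) := by
        rw [show (1/4:ℝ) = (1/2)^2 by norm_num, Real.sqrt_sq (by norm_num)]
      rw [this]
      exact Real.sqrt_le_sqrt (by linarith)
    have hB : 0 ≤ Real.sqrt v + (u - v) := by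
      have := Real.sqrt_nonneg v; linarith
    have h1 : Real.sqrt u ≤ Real.sqrt v + (u - v) := by
      have h2 : u ≤ (Real.sqrt v + (u - v))^2 := by
        have hsq := Real.sq_sqrt hv0
        nlinarith [sq_nonneg (u - v)]
      calc Real.sqrt u ≤ Real.sqrt ((Real.sqrt v + (u - v))^2) := Real.sqrt_le_sqrt h2
        _ = Real.sqrt v + (u - v) := Real.sqrt_sq hB
    linarith
  rcases le_total y x with h | h
  · have h1 := key x y hx hy h
    have h2 : 0 ≤ Real.sqrt x - Real.sqrt y := by
      have := Real.sqrt_le_sqrt h; linarith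
    rw [abs_of_nonneg h2, abs_of_nonneg (by linarith : (0:ℝ) ≤ x - y)]
    exact h1
  · have h1 := key y x hy hx h
    have h2 : 0 ≤ Real.sqrt y - Real.sqrt x := by
      have := Real.sqrt_le_sqrt h; linarith
    rw [abs_sub_comm, abs_sub_comm x y, abs_of_nonneg h2,
      abs_of_nonneg (by linarith : (0:ℝ) ≤ y - x)]
    exact h1

/-- The key radial inequality used for path-connectedness of spherical caps. -/
lemma key_ineq {t u na mm : ℝ} (ht0 : 0 ≤ t) (ht1 : t ≤ 1) (hna : 0 < na)
    (hu : |u| ≤ na) (hmm0 : 0 ≤ mm) (hmm1 : mm ≤ 1)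
    (hmm : mm^2 = (1-t)^2 + t^2 + 2*t*(1-t)*(u/na)) :
    u * mm ≤ (1-t)*u + t*na := by
  have huna : -na ≤ u ∧ u ≤ na := abs_le.mp hu
  have hdiv : -1 ≤ u/na := by
    rw [le_div_iff₀ hna]; linarith [huna.1]
  have hmmge : 1 - 2*t ≤ mm := by
    rcases le_or_gt (1 - 2*t) 0 with h | h
    · linarith
    · nlinarith [hmm, hdiv, mul_nonneg (mul_nonneg ht0 (by linarith : (0:ℝ) ≤ 1 - t)) (by linarith : (0:ℝ) ≤ 1 + u/na)]
  rcases le_or_gt u 0 with hu0 | hu0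
  · rcases le_or_gt (1 - t - mm) 0 with h | h
    · nlinarith [mul_nonneg (neg_nonneg.mpr hu0) (neg_nonneg.mpr h)]
    · have h1 : -na * (1 - t - mm) ≤ u * (1 - t - mm) :=
        mul_le_mul_of_nonneg_right huna.1 (le_of_lt h)
      nlinarith
  · nlinarith [mul_le_mul_of_nonneg_left hmm1 (le_of_lt hu0),
      mul_le_mul_of_nonneg_left huna.2 ht0]

/-- An open spherical cap (intersection of the unit sphere with an open half-space)
is preconnected, provided its complementary closed cap is nonempty. -/
lemma isPreconnected_cap (a : E) (b : ℝ)
    (hx₀ : ∃ x₀ ∈ Metric.sphere (0:E) 1, ⟪a, x₀⟫ ≤ b) :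
    IsPreconnected {x | x ∈ Metric.sphere (0:E) 1 ∧ b < ⟪a, x⟫} := by
  obtain ⟨x₀, hx₀S, hx₀⟩ := hx₀
  set cap := {x | x ∈ Metric.sphere (0:E) 1 ∧ b < ⟪a, x⟫} with hcap
  rcases Set.eq_empty_or_nonempty cap with hemp | ⟨x₁, hx₁⟩
  · rw [hemp]; exact isPreconnected_empty
  have hx₁S : ‖x₁‖ = 1 := mem_sphere_zero_iff_norm.mp hx₁.1
  have ha : a ≠ 0 := by
    rintro rfl
    have h1 : ⟪(0:E), x₁⟫ = 0 := inner_zero_left x₁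
    have h2 : ⟪(0:E), x₀⟫ = 0 := inner_zero_left x₀
    have := hx₁.2
    rw [h1] at this
    rw [h2] at hx₀
    linarith
  have hna : 0 < ‖a‖ := norm_pos_iff.mpr ha
  set c : E := ‖a‖⁻¹ • a with hc
  have hcS : ‖c‖ = 1 := by
    rw [hc, norm_smul, norm_inv, norm_norm, inv_mul_cancel₀ (ne_of_gt hna)]
  have hac : ⟪a, c⟫ = ‖a‖ := by
    rw [hc, real_inner_smul_right, real_inner_self_eq_norm_sq]
    field_simp
  have hblt : b < ‖a‖ := by
    have h1 : ⟪a, x₁⟫ ≤ ‖a‖ * ‖x₁‖ := real_inner_le_norm a x₁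
    rw [hx₁S, mul_one] at h1
    exact lt_of_lt_of_le hx₁.2 h1
  have hcmem : c ∈ cap := ⟨mem_sphere_zero_iff_norm.mpr hcS, by rw [hac]; exact hblt⟩
  have hnegc : -‖a‖ ≤ b := by
    have h1 : |⟪a, x₀⟫| ≤ ‖a‖ * ‖x₀‖ := abs_real_inner_le_norm a x₀
    rw [mem_sphere_zero_iff_norm.mp hx₀S, mul_one] at h1
    have := abs_le.mp h1
    linarith [this.1]
  -- every point of the cap is joined to the center c inside the cap
  have hJ : ∀ x ∈ cap, JoinedIn cap x c := by
    intro x hx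
    have hxS : ‖x‖ = 1 := mem_sphere_zero_iff_norm.mp hx.1
    set z : ℝ → E := fun t => (1 - t) • x + t • c with hz
    have hzc : Continuous z := by
      apply Continuous.add
      · exact (continuous_const.sub continuous_id).smul continuous_const
      · exact continuous_id.smul continuous_const
    have hxnegc : x ≠ -c := by
      intro hxc
      have h1 : ⟪a, x⟫ = -‖a‖ := by rw [hxc, inner_neg_right, hac]
      have h2 := hx.2
      rw [h1] at h2
      linarith
    have hzne : ∀ t : ℝ, 0 ≤ t → t ≤ 1 → z t ≠ 0 := by
      intro t ht0 ht1 h0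
      have heq : (1 - t) • x = -(t • c) := add_eq_zero_iff_eq_neg.mp h0
      have hnorm : (1 - t) * ‖x‖ = t * ‖c‖ := by
        have := congrArg norm heq
        rw [norm_smul, norm_neg, norm_smul] at this
        rw [Real.norm_eq_abs, Real.norm_eq_abs, abs_of_nonneg (by linarith), abs_of_nonneg ht0] at this
        exact this
      rw [hxS, hcS, mul_one, mul_one] at hnorm
      have ht : t = 1/2 := by linarith
      rw [ht] at heq
      have : x = -c := by
        have h2 : (1 - 1/2 : ℝ) = 1/2 := by norm_num
        rw [h2] at heq
        have := smul_right_injective E (by norm_num : (1/2 : ℝ) ≠ 0)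
        have h3 : (1/2 : ℝ) • x = (1/2 : ℝ) • (-c) := by rw [heq, smul_neg]
        exact this h3
      exact hxnegc this
    have hmem : ∀ t : ℝ, 0 ≤ t → t ≤ 1 → (‖z t‖)⁻¹ • z t ∈ cap := by
      intro t ht0 ht1
      have hzt := hzne t ht0 ht1
      have hm : 0 < ‖z t‖ := norm_pos_iff.mpr hzt
      have hm1 : ‖z t‖ ≤ 1 := by
        calc ‖z t‖ ≤ ‖(1-t) • x‖ + ‖t • c‖ := norm_add_le _ _
          _ = (1-t) * 1 + t * 1 := by
              rw [norm_smul, norm_smul, hxS, hcS, Real.norm_eq_abs, Real.norm_eq_abs,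
                abs_of_nonneg (by linarith), abs_of_nonneg ht0]
          _ = 1 := by ring
      constructor
      · rw [mem_sphere_zero_iff_norm, norm_smul, norm_inv, norm_norm,
          inv_mul_cancel₀ (ne_of_gt hm)]
      · have hinner : ⟪a, z t⟫ = (1-t) * ⟪a, x⟫ + t * ‖a‖ := by
          rw [hz]
          simp only [inner_add_right, real_inner_smul_right, hac]
        have hm2 : ‖z t‖^2 = (1-t)^2 + t^2 + 2*t*(1-t)*(⟪a,x⟫/‖a‖) := by
          have hxc : ⟪x, c⟫ = ⟪a,x⟫/‖a‖ := by
            rw [hc, real_inner_smul_right, real_inner_comm]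
            field_simp
          rw [hz]
          rw [norm_add_sq_real, norm_smul, norm_smul, real_inner_smul_left,
            real_inner_smul_right, hxc]
          rw [Real.norm_eq_abs, Real.norm_eq_abs, mul_pow, mul_pow, sq_abs, sq_abs,
            hxS, hcS]
          ring
        have hkey := key_ineq ht0 ht1 hna (abs_real_inner_le_norm a x |>.trans (by rw [hxS, mul_one]))
          (norm_nonneg (z t)) hm1 hm2
        rw [real_inner_smul_right, hinner]
        rw [lt_inv_mul_iff₀ hm]
        have : b * ‖z t‖ < ⟪a,x⟫ * ‖z t‖ := by
          exact mul_lt_mul_of_pos_right hx.2 hm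
        linarith
    refine ⟨⟨⟨fun s => (‖z s‖)⁻¹ • z s, ?_⟩, ?_, ?_⟩, ?_⟩
    · apply Continuous.smul
      · apply Continuous.inv₀
        · exact (hzc.comp continuous_subtype_val).norm
        · intro s
          exact norm_ne_zero_iff.mpr (hzne s s.2.1 s.2.2)
      · exact hzc.comp continuous_subtype_val
    · show (‖z 0‖)⁻¹ • z 0 = x
      have hz0 : z 0 = x := by simp [hz]
      rw [hz0, hxS]; simp
    · show (‖z 1‖)⁻¹ • z 1 = c
      have hz1 : z 1 = c := by simp [hz]
      rw [hz1, hcS]; simp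
    · intro s
      exact hmem s s.2.1 s.2.2
  have hpc : IsPathConnected cap := ⟨c, hcmem, fun {y} hy => (hJ y hy).symm⟩
  exact hpc.isConnected.isPreconnected



variable {E : Type*} [NormedAddCommGroup E] [InnerProductSpace ℝ E]

lemma eventually_sin_bound (A bb : ℝ) (hA : 0 < A) :
    ∀ᶠ t in 𝓝[>] (0:ℝ), bb * (1 - Real.cos t) < A * Real.sin t := by
  set φ : ℝ → ℝ := fun t => A * Real.sin t - bb * (1 - Real.cos t) with hφ
  have hd : HasDerivAt φ A 0 := by
    have h1 : HasDerivAt (fun t => A * Real.sin t) (A * Real.cos 0) 0 :=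
      (Real.hasDerivAt_sin 0).const_mul A
    have h2 := (((Real.hasDerivAt_cos 0).const_sub 1)).const_mul bb
    have h3 := h1.sub h2
    exact h3.congr_deriv (by simp)
  have hslope := hasDerivAt_iff_tendsto_slope.mp hd
  have hev : ∀ᶠ t in 𝓝[≠] (0:ℝ), 0 < slope φ 0 t := hslope.eventually (lt_mem_nhds hA)
  have hmono : 𝓝[>] (0:ℝ) ≤ 𝓝[≠] (0:ℝ) :=
    nhdsWithin_mono 0 (fun x hx => Set.mem_compl_singleton_iff.mpr (ne_of_gt hx))
  filter_upwards [hev.filter_mono hmono, self_mem_nhdsWithin] with t ht htpos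
  have hφ0 : φ 0 = 0 := by simp [hφ]
  rw [slope_def_field] at ht
  rw [hφ0] at ht
  have htpos' : (0:ℝ) < t := htpos
  have hpos : 0 < φ t := by
    rcases div_pos_iff.mp ht with ⟨h7, _⟩ | ⟨_, h8⟩
    · linarith
    · linarith
  simp only [hφ] at hpos
  linarith

lemma sphere_curve_mem {p u : E} (hp : ‖p‖ = 1) (hu : ‖u‖ = 1) (hpu : ⟪p, u⟫ = 0) (t : ℝ) :
    Real.cos t • p + Real.sin t • u ∈ Metric.sphere (0:E) 1 := by
  rw [mem_sphere_zero_iff_norm]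
  have h2 : ‖Real.cos t • p + Real.sin t • u‖^2 = 1 := by
    rw [norm_add_sq_real, norm_smul, norm_smul, real_inner_smul_left, real_inner_smul_right,
      hpu, Real.norm_eq_abs, Real.norm_eq_abs, mul_pow, mul_pow, sq_abs, sq_abs, hp, hu]
    ring_nf
    linarith [Real.sin_sq_add_cos_sq t]
  have h0 : 0 ≤ ‖Real.cos t • p + Real.sin t • u‖ := norm_nonneg _
  calc ‖Real.cos t • p + Real.sin t • u‖
      = Real.sqrt (‖Real.cos t • p + Real.sin t • u‖^2) := (Real.sqrt_sq h0).symm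
    _ = 1 := by rw [h2, Real.sqrt_one]

/-- If `p` lies on the boundary of a non-degenerate open cap, it is in the closure of
the open cap. -/
lemma mem_closure_cap {a : E} {b : ℝ} {p : E} (hp : p ∈ Metric.sphere (0:E) 1)
    (hab : ⟪a, p⟫ = b) (hα : a - b • p ≠ 0) :
    p ∈ closure {x | x ∈ Metric.sphere (0:E) 1 ∧ b < ⟪a, x⟫} := by
  set α := a - b • p with hαdef
  have hp1 : ‖p‖ = 1 := mem_sphere_zero_iff_norm.mp hp
  have hpp : ⟪p, p⟫ = 1 := by
    rw [real_inner_self_eq_norm_sq, hp1]; norm_num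
  have hpa : ⟪p, a⟫ = b := by rw [real_inner_comm]; exact hab
  have hpα : ⟪p, α⟫ = 0 := by
    rw [hαdef, inner_sub_right, real_inner_smul_right, hpp, hpa]; ring
  have hαa : ⟪a, α⟫ = ‖α‖^2 := by
    have h1 : ⟪α, α⟫ = ⟪a, α⟫ - b * ⟪p, α⟫ := by
      rw [hαdef]
      rw [inner_sub_left, real_inner_smul_left]
    rw [hpα, mul_zero, sub_zero] at h1
    rw [← h1, real_inner_self_eq_norm_sq]
  have hαn : 0 < ‖α‖ := norm_pos_iff.mpr hα
  set u := ‖α‖⁻¹ • α with hu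
  have hu1 : ‖u‖ = 1 := by
    rw [hu, norm_smul, norm_inv, norm_norm, inv_mul_cancel₀ (ne_of_gt hαn)]
  have hpu : ⟪p, u⟫ = 0 := by rw [hu, real_inner_smul_right, hpα]; ring
  have hau : ⟪a, u⟫ = ‖α‖ := by
    rw [hu, real_inner_smul_right, hαa]
    field_simp
  set γ : ℝ → E := fun t => Real.cos t • p + Real.sin t • u with hγ
  have hT : Tendsto γ (𝓝[>] 0) (𝓝 p) := by
    have hc : Continuous γ := by
      apply Continuous.add
      · exact (Real.continuous_cos).smul continuous_const
      · exact (Real.continuous_sin).smul continuous_const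
    have h0 : γ 0 = p := by simp [hγ]
    have := hc.tendsto 0
    rw [h0] at this
    exact this.mono_left nhdsWithin_le_nhds
  apply mem_closure_of_tendsto hT
  filter_upwards [eventually_sin_bound ‖α‖ b hαn] with t ht
  refine ⟨sphere_curve_mem hp1 hu1 hpu t, ?_⟩
  have hin : ⟪a, γ t⟫ = Real.cos t * b + Real.sin t * ‖α‖ := by
    rw [hγ]
    simp only [inner_add_right, real_inner_smul_right, hab, hau]
  rw [hin]
  nlinarith [ht]

/-- A degenerate closed cap (whose open cap is empty) is a subsingleton. -/
lemma cap_subsingleton {a : E} {b : ℝ} (ha : a ≠ 0)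
    (h : ∀ x ∈ Metric.sphere (0:E) 1, ⟪a, x⟫ ≤ b) :
    {x | x ∈ Metric.sphere (0:E) 1 ∧ b ≤ ⟪a, x⟫}.Subsingleton := by
  have hna : 0 < ‖a‖ := norm_pos_iff.mpr ha
  have hcS : ‖(‖a‖⁻¹ • a : E)‖ = 1 := by
    rw [norm_smul, norm_inv, norm_norm, inv_mul_cancel₀ (ne_of_gt hna)]
  have hb : ‖a‖ ≤ b := by
    have := h (‖a‖⁻¹ • a) (mem_sphere_zero_iff_norm.mpr hcS)
    rw [real_inner_smul_right, real_inner_self_eq_norm_sq] at this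
    have h2 : ‖a‖⁻¹ * ‖a‖^2 = ‖a‖ := by field_simp
    rw [h2] at this
    exact this
  have key : ∀ z ∈ {x | x ∈ Metric.sphere (0:E) 1 ∧ b ≤ ⟪a, x⟫}, z = ‖a‖⁻¹ • a := by
    rintro z ⟨hzS, hzb⟩
    have hz1 : ‖z‖ = 1 := mem_sphere_zero_iff_norm.mp hzS
    have hle : ⟪a, z⟫ ≤ ‖a‖ * ‖z‖ := real_inner_le_norm a z
    rw [hz1, mul_one] at hle
    have heq : ⟪a, z⟫ = ‖a‖ * ‖z‖ := by
      rw [hz1, mul_one]; linarith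
    have := inner_eq_norm_mul_iff_real.mp heq
    -- this : ‖z‖ • a = ‖a‖ • z
    rw [hz1, one_smul] at this
    have h9 := congrArg (fun w => ‖a‖⁻¹ • w) this
    simp only [smul_smul, inv_mul_cancel₀ (ne_of_gt hna), one_smul] at h9
    exact h9.symm
  intro x hx y hy
  rw [key x hx, key y hy]

lemma mem_closure_inter {ι : Type*} (a : ι → E) (bb : ι → ℝ) {x q : E}
    (hx : ∀ k, ⟪a k, x⟫ ≤ bb k) (hq : q ∈ ⋂ k, {z | ⟪a k, z⟫ < bb k}) :
    x ∈ closure (⋂ k, {z | ⟪a k, z⟫ < bb k}) := by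
  have hq' : ∀ k, ⟪a k, q⟫ < bb k := by
    intro k
    exact Set.mem_iInter.mp hq k
  have hT : Tendsto (fun t : ℝ => x + t • (q - x)) (𝓝[>] 0) (𝓝 x) := by
    have hc : Continuous fun t : ℝ => x + t • (q - x) :=
      continuous_const.add (continuous_id.smul continuous_const)
    have h0 : x + (0:ℝ) • (q - x) = x := by simp
    have := hc.tendsto 0
    rw [h0] at this
    exact this.mono_left nhdsWithin_le_nhds
  apply mem_closure_of_tendsto hT
  filter_upwards [Ioo_mem_nhdsGT one_pos] with t ht
  rw [Set.mem_iInter]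
  intro k
  have hexp : ⟪a k, x + t • (q - x)⟫ = ⟪a k, x⟫ + t * (⟪a k, q⟫ - ⟪a k, x⟫) := by
    rw [inner_add_right, real_inner_smul_right, inner_sub_right]
  show ⟪a k, x + t • (q - x)⟫ < bb k
  rw [hexp]
  nlinarith [hx k, hq' k, ht.1, ht.2, mul_lt_mul_of_pos_left (hq' k) ht.1]



lemma abs_sqrt_sub_sqrt_le2 {x y : ℝ} (hx : 3/4 ≤ x) (hy : 3/4 ≤ y) :
    |Real.sqrt x - Real.sqrt y| ≤ |x - y| := by
  have key : ∀ u v : ℝ, 3/4 ≤ u → 3/4 ≤ v → v ≤ u → Real.sqrt u - Real.sqrt v ≤ u - v := by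
    intro u v hu hv hvu
    have hv0 : (0:ℝ) ≤ v := by linarith
    have h12 : (1/2 : ℝ) ≤ Real.sqrt v := by
      have : (1/2 : ℝ) = Real.sqrt (1/4) := by
        rw [show (1/4:ℝ) = (1/2)^2 by norm_num, Real.sqrt_sq (by norm_num)]
      rw [this]
      exact Real.sqrt_le_sqrt (by linarith)
    have hB : 0 ≤ Real.sqrt v + (u - v) := by
      have := Real.sqrt_nonneg v; linarith
    have h1 : Real.sqrt u ≤ Real.sqrt v + (u - v) := by
      have h2 : u ≤ (Real.sqrt v + (u - v))^2 := by
        have hsq := Real.sq_sqrt hv0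
        nlinarith [sq_nonneg (u - v)]
      calc Real.sqrt u ≤ Real.sqrt ((Real.sqrt v + (u - v))^2) := Real.sqrt_le_sqrt h2
        _ = Real.sqrt v + (u - v) := Real.sqrt_sq hB
    linarith
  rcases le_total y x with h | h
  · have h1 := key x y hx hy h
    have h2 : 0 ≤ Real.sqrt x - Real.sqrt y := by
      have := Real.sqrt_le_sqrt h; linarith
    rw [abs_of_nonneg h2, abs_of_nonneg (by linarith : (0:ℝ) ≤ x - y)]
    exact h1
  · have h1 := key y x hy hx h
    have h2 : 0 ≤ Real.sqrt y - Real.sqrt x := by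
      have := Real.sqrt_le_sqrt h; linarith
    rw [abs_sub_comm, abs_sub_comm x y, abs_of_nonneg h2,
      abs_of_nonneg (by linarith : (0:ℝ) ≤ y - x)]
    exact h1

set_option maxHeartbeats 1000000 in
lemma liminf_density_zero {m : ℕ} (A : Set (EuclideanSpace ℝ (Fin (m+2))))
    {p αh : EuclideanSpace ℝ (Fin (m+2))}
    (hp : ‖p‖ = 1) (hαh : ‖αh‖ = 1) (hportho : ⟪p, αh⟫ = 0) {c₀ : ℝ} (hc₀ : 0 ≤ c₀)
    (hA : ∀ x ∈ A, ‖x‖ = 1 ∧ |⟪αh, x⟫| ≤ c₀ * ‖x - p‖^2) :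
    Filter.liminf
      (fun r : ℝ => μH[((m+1 : ℕ) : ℝ)] (A ∩ Metric.ball p r) / ENNReal.ofReal (r ^ (m+1)))
      (𝓝[>] (0:ℝ)) = 0 := by
  classical
  have h10 : (1 : Fin (m+2)) ≠ 0 := by simp [Fin.ext_iff]
  set v : Fin (m+2) → EuclideanSpace ℝ (Fin (m+2)) := fun k => if k = 0 then p else αh with hv
  have hvON : Orthonormal ℝ (({0, 1} : Set (Fin (m+2))).restrict v) := by
    constructor
    · rintro ⟨k, hk⟩
      simp only [Set.mem_insert_iff, Set.mem_singleton_iff] at hk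
      rcases hk with rfl | rfl
      · show ‖v 0‖ = 1
        simpa [hv] using hp
      · show ‖v 1‖ = 1
        simpa [hv, h10] using hαh
    · rintro ⟨k, hk⟩ ⟨l, hl⟩ hne
      simp only [Set.mem_insert_iff, Set.mem_singleton_iff] at hk hl
      have hkl : k ≠ l := fun h => hne (Subtype.ext h)
      rcases hk with rfl | rfl <;> rcases hl with rfl | rfl
      · exact absurd rfl hkl
      · show ⟪v 0, v 1⟫ = 0
        simp only [hv, if_pos rfl, if_neg h10]
        exact hportho
      · show ⟪v 1, v 0⟫ = 0
        simp only [hv, if_pos rfl, if_neg h10]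
        rw [real_inner_comm]
        exact hportho
      · exact absurd rfl hkl
  have hcard : Module.finrank ℝ (EuclideanSpace ℝ (Fin (m+2))) = Fintype.card (Fin (m+2)) := by
    simp [finrank_euclideanSpace_fin]
  obtain ⟨bb, hbb⟩ := hvON.exists_orthonormalBasis_extension_of_card_eq hcard
  have hb0 : bb 0 = p := by
    have := hbb 0 (by simp)
    simpa [hv] using this
  have hb1 : bb 1 = αh := by
    have := hbb 1 (by simp)
    simpa [hv, h10] using this
  -- the graph map
  set F : (Fin (m+1) → ℝ) → EuclideanSpace ℝ (Fin (m+2)) := fun y =>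
    bb.repr.symm ((WithLp.equiv 2 (∀ _ : Fin (m+2), ℝ)).symm
      (Fin.cons (Real.sqrt (1 - ∑ i, (y i)^2)) y)) with hF
  have hm0 : (0:ℝ) ≤ (m:ℝ) := Nat.cast_nonneg m
  set K : ℝ≥0 := ((2*(m+1) : ℕ) : ℝ≥0) with hK
  have hKR : (K : ℝ) = 2 * ((m:ℝ)+1) := by rw [hK]; push_cast; ring
  -- Lipschitz estimate for F on the small ball
  have hFlip : LipschitzOnWith K F {y | ∑ i, (y i)^2 ≤ 1/4} := by
    rw [lipschitzOnWith_iff_dist_le_mul]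
    intro y hy z hz
    simp only [Set.mem_setOf_eq] at hy hz
    set d := dist y z with hd
    have hd0 : 0 ≤ d := dist_nonneg
    have hdi : ∀ i, dist (y i) (z i) ≤ d := fun i => dist_le_pi_dist y z i
    have hhalf : ∀ (w : Fin (m+1) → ℝ), (∑ i, (w i)^2 ≤ 1/4) → ∀ i, |w i| ≤ 1/2 := by
      intro w hw i
      have h1 : (w i)^2 ≤ 1/4 :=
        le_trans (Finset.single_le_sum (fun j _ => sq_nonneg (w j)) (Finset.mem_univ i)) hw
      calc |w i| = Real.sqrt ((w i)^2) := (Real.sqrt_sq_eq_abs _).symm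
        _ ≤ Real.sqrt (1/4) := Real.sqrt_le_sqrt h1
        _ = 1/2 := by rw [show (1/4:ℝ) = (1/2)^2 by norm_num, Real.sqrt_sq (by norm_num)]
    have hyi := hhalf y hy
    have hzi := hhalf z hz
    have hsumdiff : |(∑ i, (y i)^2) - (∑ i, (z i)^2)| ≤ ((m:ℝ)+1) * d := by
      rw [← Finset.sum_sub_distrib]
      calc |∑ i, ((y i)^2 - (z i)^2)| ≤ ∑ i, |(y i)^2 - (z i)^2| :=
            Finset.abs_sum_le_sum_abs _ _
        _ ≤ ∑ _i : Fin (m+1), d := by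
            apply Finset.sum_le_sum
            intro i _
            have h1 : (y i)^2 - (z i)^2 = (y i - z i) * (y i + z i) := by ring
            rw [h1, abs_mul]
            have h2 : |y i - z i| ≤ d := by
              have := hdi i; rwa [Real.dist_eq] at this
            have h3 : |y i + z i| ≤ 1 := by
              calc |y i + z i| ≤ |y i| + |z i| := abs_add_le _ _
                _ ≤ 1 := by linarith [hyi i, hzi i]
            calc |y i - z i| * |y i + z i| ≤ d * 1 :=
                mul_le_mul h2 h3 (abs_nonneg _) hd0
              _ = d := mul_one d
        _ = ((m:ℝ)+1) * d := by
            rw [Finset.sum_const, Finset.card_univ, Fintype.card_fin, nsmul_eq_mul]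
            push_cast
            ring
    have h34y : 3/4 ≤ 1 - ∑ i, (y i)^2 := by linarith
    have h34z : 3/4 ≤ 1 - ∑ i, (z i)^2 := by linarith
    have hsq : |Real.sqrt (1 - ∑ i, (y i)^2) - Real.sqrt (1 - ∑ i, (z i)^2)| ≤ ((m:ℝ)+1) * d := by
      refine le_trans (abs_sqrt_sub_sqrt_le2 h34y h34z) ?_
      have h5 : (1 - ∑ i, (y i)^2) - (1 - ∑ i, (z i)^2) = -((∑ i, (y i)^2) - (∑ i, (z i)^2)) := by
        ring
      rw [h5, abs_neg]
      exact hsumdiff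
    have hFdist : dist (F y) (F z) =
        Real.sqrt ((dist (Real.sqrt (1 - ∑ i, (y i)^2)) (Real.sqrt (1 - ∑ i, (z i)^2)))^2
          + ∑ i : Fin (m+1), dist (y i) (z i)^2) := by
      rw [hF]
      simp only []
      rw [LinearIsometryEquiv.dist_map, EuclideanSpace.dist_eq, Fin.sum_univ_succ]
      simp [WithLp.equiv_symm_apply]
    rw [hFdist]
    have hterm1 : (dist (Real.sqrt (1 - ∑ i, (y i)^2)) (Real.sqrt (1 - ∑ i, (z i)^2)))^2
        ≤ (((m:ℝ)+1)*d)^2 := by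
      have h6 : dist (Real.sqrt (1 - ∑ i, (y i)^2)) (Real.sqrt (1 - ∑ i, (z i)^2)) ≤ ((m:ℝ)+1)*d := by
        rw [Real.dist_eq]; exact hsq
      exact pow_le_pow_left₀ dist_nonneg h6 2
    have hterm2 : ∑ i : Fin (m+1), dist (y i) (z i)^2 ≤ ((m:ℝ)+1) * d^2 := by
      calc ∑ i : Fin (m+1), dist (y i) (z i)^2 ≤ ∑ _i : Fin (m+1), d^2 := by
            apply Finset.sum_le_sum
            intro i _
            exact pow_le_pow_left₀ dist_nonneg (hdi i) 2
        _ = ((m:ℝ)+1) * d^2 := by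
            rw [Finset.sum_const, Finset.card_univ, Fintype.card_fin, nsmul_eq_mul]
            push_cast
            ring
    calc Real.sqrt ((dist (Real.sqrt (1 - ∑ i, (y i)^2)) (Real.sqrt (1 - ∑ i, (z i)^2)))^2
          + ∑ i : Fin (m+1), dist (y i) (z i)^2)
        ≤ Real.sqrt ((2*((m:ℝ)+1)*d)^2) := by
          apply Real.sqrt_le_sqrt
          nlinarith [sq_nonneg d, sq_nonneg (((m:ℝ)+1)*d), hm0, hd0, sq_nonneg (((m:ℝ)+1)*d - d)]
      _ = 2*((m:ℝ)+1)*d := Real.sqrt_sq (by positivity)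
      _ = (K:ℝ) * d := by rw [hKR]
  -- image inclusion
  have hsub : ∀ r : ℝ, 0 < r → r ≤ 1/2 →
      A ∩ Metric.ball p r ⊆ F '' {y | (∑ i, (y i)^2 ≤ r^2) ∧ |y 0| ≤ c₀ * r^2} := by
    rintro r hr0 hr2 x ⟨hxA, hxball⟩
    obtain ⟨hx1, hxb⟩ := hA x hxA
    set w := bb.repr x with hw
    have hw0 : w 0 = ⟪p, x⟫ := by rw [hw, bb.repr_apply_apply, hb0]
    have hw1 : w 1 = ⟪αh, x⟫ := by rw [hw, bb.repr_apply_apply, hb1]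
    have hsum1 : ∑ k, (w k)^2 = 1 := by
      have hn : ‖w‖ = 1 := by rw [hw, LinearIsometryEquiv.norm_map, hx1]
      have hEn := EuclideanSpace.norm_eq w
      have h2 : Real.sqrt (∑ k, ‖w k‖^2) = 1 := by rw [← hEn, hn]
      have hS0 : 0 ≤ ∑ k, ‖w k‖^2 := Finset.sum_nonneg fun k _ => sq_nonneg _
      have h4 : ∑ k, ‖w k‖^2 = 1 := by
        have h5 : Real.sqrt (∑ k, ‖w k‖^2) ^ 2 = 1 := by rw [h2]; norm_num
        rwa [Real.sq_sqrt hS0] at h5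
      simpa [Real.norm_eq_abs, sq_abs] using h4
    have hxp : ‖x - p‖^2 = 2 - 2*⟪p,x⟫ := by
      rw [norm_sub_sq_real, hx1, hp, real_inner_comm x p]
      ring
    have hballn : ‖x - p‖ < r := by
      rw [Metric.mem_ball, dist_eq_norm] at hxball; exact hxball
    have hxpr : ‖x - p‖^2 ≤ r^2 := by nlinarith [norm_nonneg (x - p)]
    have hw0v : 0 ≤ w 0 := by rw [hw0]; nlinarith
    have hsplit : (w 0)^2 + ∑ i : Fin (m+1), (w i.succ)^2 = 1 := by
      have := hsum1
      rw [Fin.sum_univ_succ] at this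
      exact this
    have htail : ∀ i : Fin (m+1), Fin.tail w i = w i.succ := fun i => rfl
    have hsumtail : ∑ i, (Fin.tail w i)^2 = 1 - (w 0)^2 := by
      simp only [htail]
      linarith [hsplit]
    have hw0le : w 0 ≤ 1 := by
      nlinarith [hsplit, Finset.sum_nonneg (fun i (_ : i ∈ (Finset.univ : Finset (Fin (m+1)))) => sq_nonneg (w i.succ))]
    refine ⟨Fin.tail w, ⟨?_, ?_⟩, ?_⟩
    · rw [hsumtail]
      nlinarith
    · show |Fin.tail w 0| ≤ c₀ * r^2
      rw [show Fin.tail w 0 = w 1 from rfl, hw1]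
      calc |⟪αh,x⟫| ≤ c₀ * ‖x - p‖^2 := hxb
        _ ≤ c₀ * r^2 := mul_le_mul_of_nonneg_left hxpr hc₀
    · show F (Fin.tail w) = x
      rw [hF]
      simp only []
      rw [hsumtail, show (1 - (1 - (w 0)^2)) = (w 0)^2 by ring, Real.sqrt_sq hw0v]
      have h7 : (Fin.cons (w 0) (Fin.tail w) : ∀ _ : Fin (m+2), ℝ)
          = (WithLp.equiv 2 (∀ _ : Fin (m+2), ℝ)) w := by
        ext k
        refine Fin.cases ?_ ?_ k
        · simp
        · intro i
          simp [Fin.tail]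
      rw [h7, Equiv.symm_apply_apply, hw]
      exact bb.repr.symm_apply_apply x
  -- measure bound
  set CC : ℝ := ((2*(m+1):ℕ):ℝ)^(m+1) * (2*c₀) * 2^m with hCC
  have hmeas : ∀ r : ℝ, 0 < r → r ≤ 1/2 →
      μH[((m+1:ℕ):ℝ)] (A ∩ Metric.ball p r) ≤ ENNReal.ofReal (CC * r^(m+2)) := by
    intro r hr0 hr2
    set D := {y : Fin (m+1) → ℝ | (∑ i, (y i)^2 ≤ r^2) ∧ |y 0| ≤ c₀*r^2} with hD
    have hDsub : D ⊆ {y | ∑ i, (y i)^2 ≤ 1/4} := by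
      intro y hy
      have := hy.1
      simp only [Set.mem_setOf_eq]
      nlinarith
    have h1 : μH[((m+1:ℕ):ℝ)] (A ∩ Metric.ball p r) ≤ μH[((m+1:ℕ):ℝ)] (F '' D) :=
      measure_mono (hsub r hr0 hr2)
    have h2 := (hFlip.mono hDsub).hausdorffMeasure_image_le
      (by positivity : (0:ℝ) ≤ ((m+1:ℕ):ℝ))
    set cbox : Fin (m+1) → ℝ := Fin.cons (c₀*r^2) (fun _ => r) with hcbox
    have hboxsub : D ⊆ Set.pi Set.univ (fun i => Set.Icc (-(cbox i)) (cbox i)) := by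
      intro y hy
      rw [Set.mem_pi]
      intro i _
      refine Fin.cases ?_ (fun i' => ?_) i
      · rw [hcbox]
        simp only [Fin.cons_zero]
        exact Set.mem_Icc.mpr (abs_le.mp hy.2)
      · rw [hcbox]
        simp only [Fin.cons_succ]
        have hq1 : (y i'.succ)^2 ≤ r^2 :=
          le_trans (Finset.single_le_sum (fun j _ => sq_nonneg (y j)) (Finset.mem_univ _)) hy.1
        have hq2 : |y i'.succ| ≤ r := by
          calc |y i'.succ| = Real.sqrt ((y i'.succ)^2) := (Real.sqrt_sq_eq_abs _).symm
            _ ≤ Real.sqrt (r^2) := Real.sqrt_le_sqrt hq1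
            _ = r := Real.sqrt_sq hr0.le
        exact Set.mem_Icc.mpr (abs_le.mp hq2)
    have h3 : μH[((m+1:ℕ):ℝ)] D ≤ ENNReal.ofReal (2*(c₀*r^2)) * ENNReal.ofReal (2*r)^m := by
      calc μH[((m+1:ℕ):ℝ)] D ≤ μH[((m+1:ℕ):ℝ)] (Set.pi Set.univ (fun i => Set.Icc (-(cbox i)) (cbox i))) :=
            measure_mono hboxsub
        _ = volume (Set.pi Set.univ (fun i => Set.Icc (-(cbox i)) (cbox i))) := by
            rw [show ((m+1:ℕ):ℝ) = ((Fintype.card (Fin (m+1)) : ℕ) : ℝ) by simp]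
            rw [hausdorffMeasure_pi_real]
        _ = ∏ i, volume (Set.Icc (-(cbox i)) (cbox i)) := volume_pi_pi _
        _ = ENNReal.ofReal (2*(c₀*r^2)) * ENNReal.ofReal (2*r)^m := by
            rw [Fin.prod_univ_succ]
            have hc0 : volume (Set.Icc (-(cbox 0)) (cbox 0)) = ENNReal.ofReal (2*(c₀*r^2)) := by
              rw [hcbox]
              simp only [Fin.cons_zero]
              rw [Real.volume_Icc]
              congr 1
              ring
            have hcs : ∀ i : Fin m, volume (Set.Icc (-(cbox i.succ)) (cbox i.succ)) = ENNReal.ofReal (2*r) := by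
              intro i
              rw [hcbox]
              simp only [Fin.cons_succ]
              rw [Real.volume_Icc]
              congr 1
              ring
            rw [hc0, Finset.prod_congr rfl (fun i _ => hcs i), Finset.prod_const,
              Finset.card_univ, Fintype.card_fin]
    have hKpow : (K : ℝ≥0∞) ^ ((m+1:ℕ):ℝ) = ENNReal.ofReal (((2*(m+1):ℕ):ℝ)^(m+1)) := by
      rw [ENNReal.rpow_natCast, ← ENNReal.coe_pow, ← ENNReal.ofReal_coe_nnreal]
      congr 1
      all_goals (try rw [hK]); all_goals (try push_cast); all_goals (try ring)
    calc μH[((m+1:ℕ):ℝ)] (A ∩ Metric.ball p r) ≤ μH[((m+1:ℕ):ℝ)] (F '' D) := h1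
      _ ≤ (K : ℝ≥0∞) ^ ((m+1:ℕ):ℝ) * μH[((m+1:ℕ):ℝ)] D := h2
      _ ≤ (K : ℝ≥0∞) ^ ((m+1:ℕ):ℝ) * (ENNReal.ofReal (2*(c₀*r^2)) * ENNReal.ofReal (2*r)^m) :=
          by gcongr
      _ = ENNReal.ofReal (CC * r^(m+2)) := by
          rw [hKpow, ← ENNReal.ofReal_pow (by linarith : (0:ℝ) ≤ 2*r),
            ← ENNReal.ofReal_mul (by positivity), ← ENNReal.ofReal_mul (by positivity)]
          congr 1
          rw [hCC]
          push_cast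
          ring
  -- conclude
  apply le_antisymm _ zero_le
  have hev : ∀ᶠ r in 𝓝[>] (0:ℝ),
      μH[((m+1:ℕ):ℝ)] (A ∩ Metric.ball p r) / ENNReal.ofReal (r ^ (m+1))
        ≤ ENNReal.ofReal (CC * r) := by
    filter_upwards [Ioo_mem_nhdsGT (by norm_num : (0:ℝ) < 1/2)] with r hr
    have h := hmeas r hr.1 hr.2.le
    calc μH[((m+1:ℕ):ℝ)] (A ∩ Metric.ball p r) / ENNReal.ofReal (r ^ (m+1))
        ≤ ENNReal.ofReal (CC * r^(m+2)) / ENNReal.ofReal (r^(m+1)) :=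
          ENNReal.div_le_div_right h _
      _ = ENNReal.ofReal (CC * r^(m+2) / r^(m+1)) :=
          (ENNReal.ofReal_div_of_pos (pow_pos hr.1 _)).symm
      _ = ENNReal.ofReal (CC * r) := by
          congr 1
          have hne : r^(m+1) ≠ 0 := (pow_pos hr.1 _).ne'
          field_simp
          ring
  refine le_trans (Filter.liminf_le_liminf hev) ?_
  have hT : Tendsto (fun r : ℝ => ENNReal.ofReal (CC * r)) (𝓝[>] (0:ℝ)) (𝓝 0) := by
    have h0 : Tendsto (fun r : ℝ => CC * r) (𝓝[>] (0:ℝ)) (𝓝 0) := by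
      have h1 : Tendsto (fun r : ℝ => CC * r) (𝓝 0) (𝓝 (CC * 0)) :=
        (continuous_const.mul continuous_id).tendsto 0
      rw [mul_zero] at h1
      exact h1.mono_left nhdsWithin_le_nhds
    have h2 := (ENNReal.continuous_ofReal.tendsto 0).comp h0
    simpa [Function.comp_def] using h2
  rw [hT.liminf_eq]


end PolySphere

set_option maxHeartbeats 1000000 in
theorem polyhedron_sphere_zero_density {n : ℕ} {ι : Type*} [Fintype ι]
    (a : ι → EuclideanSpace ℝ (Fin (n + 1))) (b : ι → ℝ)
    (P : Set (EuclideanSpace ℝ (Fin (n + 1))))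
    (hP : P = ⋂ i, {x | ⟪a i, x⟫ < b i})
    (hconn : IsConnected (Metric.sphere (0 : EuclideanSpace ℝ (Fin (n + 1))) 1 \ P))
    (hdisc : ¬ IsPreconnected
      (Metric.sphere (0 : EuclideanSpace ℝ (Fin (n + 1))) 1 \ closure P)) :
    ∃ p ∈ closure P ∩ Metric.sphere (0 : EuclideanSpace ℝ (Fin (n + 1))) 1,
      Filter.liminf
        (fun r : ℝ =>
          μH[(n : ℝ)]
            (P ∩ Metric.sphere (0 : EuclideanSpace ℝ (Fin (n + 1))) 1 ∩ Metric.ball p r)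
            / ENNReal.ofReal (r ^ n))
        (𝓝[>] (0 : ℝ)) = 0 := by
  classical
  set S := Metric.sphere (0 : EuclideanSpace ℝ (Fin (n + 1))) 1 with hSdef
  set co : ι → Set (EuclideanSpace ℝ (Fin (n+1))) :=
    fun k => {x | x ∈ S ∧ b k < ⟪a k, x⟫} with hco
  set cc : ι → Set (EuclideanSpace ℝ (Fin (n+1))) :=
    fun k => {x | x ∈ S ∧ b k ≤ ⟪a k, x⟫} with hcc
  have hQle : ∀ k, closure P ⊆ {x | ⟪a k, x⟫ ≤ b k} := by
    intro k
    apply closure_minimal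
    · rw [hP]
      intro x hx
      have h1 : ⟪a k, x⟫ < b k := Set.mem_iInter.mp hx k
      exact le_of_lt h1
    · have hcont : Continuous fun x : EuclideanSpace ℝ (Fin (n+1)) => ⟪a k, x⟫ :=
        Continuous.inner continuous_const continuous_id
      exact isClosed_le hcont continuous_const
  have hcoQ : ∀ k, co k ⊆ S \ closure P := by
    intro k x hx
    exact ⟨hx.1, fun hQ => absurd (hQle k hQ) (not_le.mpr hx.2)⟩
  have hSP : S \ P = ⋃ k, cc k := by
    ext x
    constructor
    · rintro ⟨hxS, hxP⟩
      rw [hP] at hxP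
      have hex : ∃ k, ¬ (⟪a k, x⟫ < b k) := by
        by_contra hall
        push_neg at hall
        exact hxP (Set.mem_iInter.mpr fun k => hall k)
      obtain ⟨k, hk⟩ := hex
      exact Set.mem_iUnion.mpr ⟨k, hxS, not_lt.mp hk⟩
    · intro hx
      obtain ⟨k, hkS, hk⟩ := Set.mem_iUnion.mp hx
      refine ⟨hkS, fun hxP => ?_⟩
      rw [hP] at hxP
      exact absurd (Set.mem_iInter.mp hxP k) (not_lt.mpr hk)
  rcases P.eq_empty_or_nonempty with hPe | ⟨q, hq⟩
  · exfalso
    apply hdisc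
    have h1 : S \ closure P = S \ P := by rw [hPe, closure_empty]
    rw [h1]
    exact hconn.isPreconnected
  have hqlt : ∀ k, ⟪a k, q⟫ < b k := by
    intro k
    rw [hP] at hq
    exact Set.mem_iInter.mp hq k
  have hqP : q ∈ ⋂ k, {z : EuclideanSpace ℝ (Fin (n+1)) | ⟪a k, z⟫ < b k} :=
    Set.mem_iInter.mpr hqlt
  have hClo : ∀ {x : EuclideanSpace ℝ (Fin (n+1))}, (∀ k, ⟪a k, x⟫ ≤ b k) → x ∈ closure P := by
    intro x hx
    rw [hP]
    exact PolySphere.mem_closure_inter a b hx hqP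
  have hSQ : S \ closure P = ⋃ k, co k := by
    ext x
    constructor
    · rintro ⟨hxS, hxQ⟩
      by_contra hxco
      apply hxQ
      apply hClo
      intro k
      by_contra hgt
      exact hxco (Set.mem_iUnion.mpr ⟨k, hxS, not_le.mp hgt⟩)
    · intro hx
      obtain ⟨k, hk⟩ := Set.mem_iUnion.mp hx
      exact hcoQ k hk
  have hglob : ¬ (S ⊆ S \ closure P) := by
    intro hsub
    apply hdisc
    have h1 : S \ closure P = S := Set.Subset.antisymm Set.diff_subset hsub
    have h2 : S \ P = S := Set.Subset.antisymm Set.diff_subset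
      (hsub.trans (Set.diff_subset_diff_right subset_closure))
    rw [h1, ← h2]
    exact hconn.isPreconnected
  have hcapconn : ∀ k, IsPreconnected (co k) := by
    intro k
    have hex : ∃ x₀ ∈ Metric.sphere (0 : EuclideanSpace ℝ (Fin (n+1))) 1, ⟪a k, x₀⟫ ≤ b k := by
      by_contra hno
      push_neg at hno
      exact hglob fun x hxS => hcoQ k ⟨hxS, hno x hxS⟩
    exact PolySphere.isPreconnected_cap (a k) (b k) hex
  have hdisc' := hdisc
  unfold IsPreconnected at hdisc'
  push_neg at hdisc'
  obtain ⟨U, V, hUo, hVo, hUVcov, hUne, hVne, hUV⟩ := hdisc'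
  have hUV' : ∀ x, x ∈ S \ closure P → x ∈ U → x ∈ V → False := by
    intro x h1 h2 h3
    exact Set.eq_empty_iff_forall_notMem.mp hUV x ⟨h1, h2, h3⟩
  have hsplit : ∀ k, (co k).Nonempty → co k ⊆ U ∨ co k ⊆ V := by
    intro k hne
    by_contra hcon
    push_neg at hcon
    obtain ⟨hnU, hnV⟩ := hcon
    obtain ⟨x, hxk, hxU⟩ := Set.not_subset.mp hnU
    obtain ⟨y, hyk, hyV⟩ := Set.not_subset.mp hnV
    have hxV : x ∈ V := by
      rcases hUVcov (hcoQ k hxk) with h | h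
      · exact absurd h hxU
      · exact h
    have hyU : y ∈ U := by
      rcases hUVcov (hcoQ k hyk) with h | h
      · exact h
      · exact absurd h hyV
    obtain ⟨z, hzk, hzU, hzV⟩ := hcapconn k U V hUo hVo (fun w hw => hUVcov (hcoQ k hw))
      ⟨y, hyk, hyU⟩ ⟨x, hxk, hxV⟩
    exact hUV' z (hcoQ k hzk) hzU hzV
  obtain ⟨xu, hxuSQ, hxuU⟩ := hUne
  obtain ⟨xv, hxvSQ, hxvV⟩ := hVne
  obtain ⟨i, hxui⟩ := Set.mem_iUnion.mp (hSQ ▸ hxuSQ)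
  obtain ⟨j, hxvj⟩ := Set.mem_iUnion.mp (hSQ ▸ hxvSQ)
  have hiU : co i ⊆ U := by
    rcases hsplit i ⟨xu, hxui⟩ with h | h
    · exact h
    · exact absurd (h hxui) (fun hV => hUV' xu (hcoQ i hxui) hxuU hV)
  have hjV : co j ⊆ V := by
    rcases hsplit j ⟨xv, hxvj⟩ with h | h
    · exact absurd (h hxvj) (fun hU => hUV' xv (hcoQ j hxvj) hU hxvV)
    · exact h
  set IU : Set ι := {k | (co k).Nonempty ∧ co k ⊆ U} with hIU
  set IV : Set ι := {k | (co k).Nonempty ∧ co k ⊆ V} with hIV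
  set FU : Set (EuclideanSpace ℝ (Fin (n+1))) := ⋃ k ∈ IU, cc k with hFU
  set FV : Set (EuclideanSpace ℝ (Fin (n+1))) := ⋃ k ∈ IV, cc k with hFV
  have hccC : ∀ k, IsClosed (cc k) := by
    intro k
    have heq : cc k = S ∩ {x | b k ≤ ⟪a k, x⟫} := rfl
    rw [heq]
    exact Metric.isClosed_sphere.inter
      (isClosed_le continuous_const (continuous_const.inner continuous_id))
  have hFUc : IsClosed FU := (Set.toFinite IU).isClosed_biUnion fun k _ => hccC k
  have hFVc : IsClosed FV := (Set.toFinite IV).isClosed_biUnion fun k _ => hccC k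
  have hcoSP : ∀ k, co k ⊆ S \ P := by
    intro k x hx
    have h1 := hcoQ k hx
    exact ⟨h1.1, fun hP' => h1.2 (subset_closure hP')⟩
  rcases Set.eq_empty_or_nonempty (FU ∩ FV) with hFUV | hFUV
  · -- FU and FV disjoint : contradiction with connectedness of S \ P
    exfalso
    have hFUVn : ∀ x, x ∈ FU → x ∈ FV → False := by
      intro x h1 h2
      rw [Set.eq_empty_iff_forall_notMem] at hFUV
      exact hFUV x ⟨h1, h2⟩
    set W : Set (EuclideanSpace ℝ (Fin (n+1))) := (S \ P) \ (FU ∪ FV) with hW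
    have hWsub : ∀ x ∈ W, ∃ k, x ∈ cc k ∧ ¬ (co k).Nonempty := by
      rintro x ⟨hxSP, hxFUV⟩
      rw [hSP] at hxSP
      obtain ⟨k, hk⟩ := Set.mem_iUnion.mp hxSP
      refine ⟨k, hk, fun hne => ?_⟩
      rcases hsplit k hne with h | h
      · exact hxFUV (Or.inl (Set.mem_biUnion ⟨hne, h⟩ hk))
      · exact hxFUV (Or.inr (Set.mem_biUnion ⟨hne, h⟩ hk))
    have hccsub : ∀ k, ¬ (co k).Nonempty → (cc k).Subsingleton := by
      intro k hkne
      have hempty : ∀ x ∈ Metric.sphere (0 : EuclideanSpace ℝ (Fin (n+1))) 1,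
          ⟪a k, x⟫ ≤ b k := by
        intro x hxS
        by_contra hgt
        exact hkne ⟨x, hxS, not_le.mp hgt⟩
      by_cases hak : a k = 0
      · intro x hx y hy
        exfalso
        have hbk : 0 < b k := by
          have h1 := hqlt k
          rwa [hak, inner_zero_left] at h1
        have h2 := hx.2
        rw [hak, inner_zero_left] at h2
        linarith
      · exact PolySphere.cap_subsingleton hak hempty
    have hWfin : W.Finite := by
      have hsub2 : W ⊆ ⋃ k ∈ {k : ι | ¬ (co k).Nonempty}, cc k := by
        intro x hx
        obtain ⟨k, hk1, hk2⟩ := hWsub x hx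
        exact Set.mem_biUnion hk2 hk1
      apply Set.Finite.subset _ hsub2
      apply Set.Finite.biUnion (Set.toFinite _)
      intro k hk
      exact (hccsub k hk).finite
    set X : Set (EuclideanSpace ℝ (Fin (n+1))) := FU ∪ W with hX
    have hXc : IsClosed X := hFUc.union hWfin.isClosed
    have hcov : S \ P ⊆ X ∪ FV := by
      intro x hx
      by_cases h1 : x ∈ FU
      · exact Or.inl (Or.inl h1)
      · by_cases h2 : x ∈ FV
        · exact Or.inr h2
        · exact Or.inl (Or.inr ⟨hx, fun h => h.elim h1 h2⟩)
    have hXne : ((S \ P) ∩ X).Nonempty :=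
      ⟨xu, hcoSP i hxui, Or.inl (Set.mem_biUnion ⟨⟨xu, hxui⟩, hiU⟩ ⟨hxui.1, le_of_lt hxui.2⟩)⟩
    have hFVne : ((S \ P) ∩ FV).Nonempty :=
      ⟨xv, hcoSP j hxvj, Set.mem_biUnion ⟨⟨xv, hxvj⟩, hjV⟩ ⟨hxvj.1, le_of_lt hxvj.2⟩⟩
    obtain ⟨z, hzS, hzX, hzFV⟩ := isPreconnected_closed_iff.mp hconn.isPreconnected X FV
      hXc hFVc hcov hXne hFVne
    rcases hzX with h | h
    · exact hFUVn z h hzFV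
    · exact h.2 (Or.inr hzFV)
  · -- main branch : a touching point exists
    obtain ⟨p, hpFU, hpFV⟩ := hFUV
    obtain ⟨i', hi'IU, hpcci⟩ := Set.mem_iUnion₂.mp hpFU
    obtain ⟨j', hj'IV, hpccj⟩ := Set.mem_iUnion₂.mp hpFV
    obtain ⟨hi'ne, hi'U⟩ := hi'IU
    obtain ⟨hj'ne, hj'V⟩ := hj'IV
    have hpS : p ∈ S := hpcci.1
    have hp1 : ‖p‖ = 1 := mem_sphere_zero_iff_norm.mp hpS
    have hpp : ⟪p, p⟫ = 1 := by
      rw [real_inner_self_eq_norm_sq, hp1]; norm_num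
    -- degenerate-cap analysis
    have hdegen : ∀ l, a l - b l • p = 0 → (co l).Nonempty →
        (∀ x, x ∈ S → x ≠ p → x ∈ co l) ∧ p ∉ co l ∧ b l < 0 := by
      intro l hal hne
      obtain ⟨x₁, hx₁S, hx₁lt⟩ := hne
      have hal' : a l = b l • p := sub_eq_zero.mp hal
      have hx₁n : ‖x₁‖ = 1 := mem_sphere_zero_iff_norm.mp hx₁S
      have hinner : ∀ x : EuclideanSpace ℝ (Fin (n+1)), ⟪a l, x⟫ = b l * ⟪p, x⟫ := by
        intro x; rw [hal', real_inner_smul_left]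
      have hpx₁ : ⟪p, x₁⟫ ≤ 1 := by
        have h1 := real_inner_le_norm p x₁
        rw [hp1, hx₁n] at h1; simpa using h1
      have hbl : b l < 0 := by
        rcases lt_trichotomy (b l) 0 with h | h | h
        · exact h
        · exfalso
          have h2 := hx₁lt
          rw [hinner x₁, h] at h2
          simp at h2
        · exfalso
          have h2 := hx₁lt
          rw [hinner x₁] at h2
          nlinarith
      refine ⟨?_, ?_, hbl⟩
      · intro x hxS hxp
        have hxn : ‖x‖ = 1 := mem_sphere_zero_iff_norm.mp hxS
        have hlt1 : ⟪p, x⟫ < 1 := by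
          have h1 : ‖x - p‖^2 = 2 - 2*⟪p,x⟫ := by
            rw [norm_sub_sq_real, hxn, hp1, real_inner_comm]; ring
          have h2 : 0 < ‖x - p‖ := by
            rw [norm_pos_iff]; exact sub_ne_zero.mpr hxp
          nlinarith
        refine ⟨hxS, ?_⟩
        rw [hinner x]
        nlinarith
      · intro hpco
        have h2 := hpco.2
        rw [hinner p, hpp, mul_one] at h2
        exact lt_irrefl _ h2
    have hkey : ∀ (U' V' : Set (EuclideanSpace ℝ (Fin (n+1)))),
        (∀ x, x ∈ S \ closure P → x ∈ U' → x ∈ V' → False) →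
        ∀ k l, p ∈ co k → co k ⊆ U' → p ∈ cc l → co l ⊆ V' → (co l).Nonempty → False := by
      intro U' V' hdisj k l hpk hkU hpl hlV hlne
      rcases lt_or_eq_of_le hpl.2 with hlt | heq
      · exact hdisj p (hcoQ k hpk) (hkU hpk) (hlV ⟨hpl.1, hlt⟩)
      · by_cases hβ0 : a l - b l • p = 0
        · obtain ⟨hall, hpno, hbl⟩ := hdegen l hβ0 hlne
          apply hglob
          intro x hxS
          by_cases hxp : x = p
          · rw [hxp]; exact hcoQ k hpk
          · exact hcoQ l (hall x hxS hxp)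
        · have hpc : p ∈ closure (co l) := PolySphere.mem_closure_cap hpS heq.symm hβ0
          have hopen : IsOpen {x : EuclideanSpace ℝ (Fin (n+1)) | b k < ⟪a k, x⟫} :=
            isOpen_lt continuous_const (continuous_const.inner continuous_id)
          obtain ⟨z, hz1, hz2⟩ := _root_.mem_closure_iff.mp hpc _ hopen hpk.2
          have hzk : z ∈ co k := ⟨hz2.1, hz1⟩
          exact hdisj z (hcoQ l hz2) (hkU hzk) (hlV hz2)
    have hC1 : ∀ k, ⟪a k, p⟫ ≤ b k := by
      intro k
      by_contra hgt
      have hpk : p ∈ co k := ⟨hpS, not_le.mp hgt⟩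
      rcases hsplit k ⟨p, hpk⟩ with hkU | hkV
      · exact hkey U V hUV' k j' hpk hkU hpccj hj'V hj'ne
      · exact hkey V U (fun x h h1 h2 => hUV' x h h2 h1) k i' hpk hkV hpcci hi'U hi'ne
    have hbi : ⟪a i', p⟫ = b i' := le_antisymm (hC1 i') hpcci.2
    have hbj : ⟪a j', p⟫ = b j' := le_antisymm (hC1 j') hpccj.2
    have hpQ : p ∈ closure P := hClo hC1
    have hdisjij : ∀ x, x ∈ co i' → x ∈ co j' → False := fun x h1 h2 =>
      hUV' x (hcoQ i' h1) (hi'U h1) (hj'V h2)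
    -- Step 3 : tangential structure at p
    set α := a i' - b i' • p with hα
    set β := a j' - b j' • p with hβ
    have hαne : α ≠ 0 := by
      intro h0
      obtain ⟨hall, hpno, hbl⟩ := hdegen i' h0 hi'ne
      obtain ⟨x₂, hx₂⟩ := hj'ne
      have hx₂p : x₂ ≠ p := by
        intro h
        rw [h] at hx₂
        exact absurd hbj (ne_of_gt hx₂.2)
      exact hdisjij x₂ (hall x₂ hx₂.1 hx₂p) hx₂
    have hβne : β ≠ 0 := by
      intro h0
      obtain ⟨hall, hpno, hbl⟩ := hdegen j' h0 hj'ne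
      obtain ⟨x₂, hx₂⟩ := hi'ne
      have hx₂p : x₂ ≠ p := by
        intro h
        rw [h] at hx₂
        exact absurd hbi (ne_of_gt hx₂.2)
      exact hdisjij x₂ hx₂ (hall x₂ hx₂.1 hx₂p)
    have hpα : ⟪p, α⟫ = 0 := by
      rw [hα, inner_sub_right, real_inner_smul_right, hpp, real_inner_comm, hbi]; ring
    have hpβ : ⟪p, β⟫ = 0 := by
      rw [hβ, inner_sub_right, real_inner_smul_right, hpp, real_inner_comm, hbj]; ring
    have h3b : ∀ v : EuclideanSpace ℝ (Fin (n+1)),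
        ⟪p, v⟫ = 0 → 0 < ⟪α, v⟫ → 0 < ⟪β, v⟫ → False := by
      intro v hpv hαv hβv
      have hv0 : v ≠ 0 := by
        rintro rfl
        rw [inner_zero_right] at hαv
        exact lt_irrefl 0 hαv
      have hvn : 0 < ‖v‖ := norm_pos_iff.mpr hv0
      set u := ‖v‖⁻¹ • v with hu
      have hun : ‖u‖ = 1 := by
        rw [hu, norm_smul, norm_inv, norm_norm, inv_mul_cancel₀ hvn.ne']
      have hpu : ⟪p, u⟫ = 0 := by rw [hu, real_inner_smul_right, hpv]; ring
      have hαu : 0 < ⟪α, u⟫ := by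
        rw [hu, real_inner_smul_right]
        exact mul_pos (inv_pos.mpr hvn) hαv
      have hβu : 0 < ⟪β, u⟫ := by
        rw [hu, real_inner_smul_right]
        exact mul_pos (inv_pos.mpr hvn) hβv
      obtain ⟨t, ht1, ht2⟩ :=
        ((PolySphere.eventually_sin_bound _ (b i') hαu).and
          (PolySphere.eventually_sin_bound _ (b j') hβu)).exists
      set x := Real.cos t • p + Real.sin t • u with hxdef
      have hxS : x ∈ S := PolySphere.sphere_curve_mem hp1 hun hpu t
      have hxi : x ∈ co i' := by
        refine ⟨hxS, ?_⟩
        have e1 : ⟪a i', x⟫ = Real.cos t * b i' + Real.sin t * ⟪a i', u⟫ := by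
          rw [hxdef, inner_add_right, real_inner_smul_right, real_inner_smul_right, hbi]
        have e2 : ⟪α, u⟫ = ⟪a i', u⟫ - b i' * ⟪p, u⟫ := by
          rw [hα, inner_sub_left, real_inner_smul_left]
        rw [hpu, mul_zero, sub_zero] at e2
        rw [e1, ← e2]
        nlinarith [ht1]
      have hxj : x ∈ co j' := by
        refine ⟨hxS, ?_⟩
        have e1 : ⟪a j', x⟫ = Real.cos t * b j' + Real.sin t * ⟪a j', u⟫ := by
          rw [hxdef, inner_add_right, real_inner_smul_right, real_inner_smul_right, hbj]
        have e2 : ⟪β, u⟫ = ⟪a j', u⟫ - b j' * ⟪p, u⟫ := by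
          rw [hβ, inner_sub_left, real_inner_smul_left]
        rw [hpu, mul_zero, sub_zero] at e2
        rw [e1, ← e2]
        nlinarith [ht2]
      exact hdisjij x hxi hxj
    have hnormα : 0 < ‖α‖ := norm_pos_iff.mpr hαne
    have hnormβ : 0 < ‖β‖ := norm_pos_iff.mpr hβne
    have hCS : ⟪α, β⟫ = -(‖α‖ * ‖β‖) := by
      by_contra hne2
      have habs := abs_real_inner_le_norm α β
      have hgt : -(‖α‖ * ‖β‖) < ⟪α, β⟫ := by
        rcases abs_le.mp habs with ⟨h1, _⟩
        exact lt_of_le_of_ne (by linarith) (Ne.symm hne2)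
      set v := ‖β‖ • α + ‖α‖ • β with hv2
      have hpv : ⟪p, v⟫ = 0 := by
        rw [hv2, inner_add_right, real_inner_smul_right, real_inner_smul_right, hpα, hpβ]; ring
      have hαv : 0 < ⟪α, v⟫ := by
        rw [hv2, inner_add_right, real_inner_smul_right, real_inner_smul_right,
          real_inner_self_eq_norm_sq]
        nlinarith
      have hβv : 0 < ⟪β, v⟫ := by
        rw [hv2, inner_add_right, real_inner_smul_right, real_inner_smul_right,
          real_inner_self_eq_norm_sq, real_inner_comm α β]
        nlinarith
      exact h3b v hpv hαv hβv
    set s := ‖β‖ / ‖α‖ with hsdef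
    have hs0 : 0 < s := div_pos hnormβ hnormα
    have hβα : ∀ x : EuclideanSpace ℝ (Fin (n+1)), ⟪β, x⟫ = -(s * ⟪α, x⟫) := by
      have hzero : ‖‖β‖ • α + ‖α‖ • β‖^2 = 0 := by
        rw [norm_add_sq_real, real_inner_smul_left, real_inner_smul_right,
          norm_smul, norm_smul, norm_norm, norm_norm, hCS]
        ring
      have hzero2 : ‖β‖ • α + ‖α‖ • β = 0 := by
        have h1 := (pow_eq_zero_iff (by norm_num : (2:ℕ) ≠ 0)).mp hzero
        exact norm_eq_zero.mp h1
      intro x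
      have h2 := congrArg (fun w => ⟪w, x⟫) hzero2
      simp only [inner_add_left, real_inner_smul_left, inner_zero_left] at h2
      have h3 := congrArg (fun t => ‖α‖⁻¹ * t) h2
      simp only [mul_add, mul_zero] at h3
      have h4 : ‖α‖⁻¹ * (‖α‖ * ⟪β, x⟫) = ⟪β, x⟫ := by
        rw [← mul_assoc, inv_mul_cancel₀ hnormα.ne', one_mul]
      have h5 : ‖α‖⁻¹ * (‖β‖ * ⟪α, x⟫) = s * ⟪α, x⟫ := by
        rw [hsdef]; ring
      rw [h4, h5] at h3
      linarith
    set c₀ := max |b i'| (|b j'| / s) / (2 * ‖α‖) with hc₀def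
    have hc₀0 : 0 ≤ c₀ := by
      apply div_nonneg _ (by positivity)
      exact le_trans (abs_nonneg (b i')) (le_max_left _ _)
    set αh := ‖α‖⁻¹ • α with hαhdef
    have hαh1 : ‖αh‖ = 1 := by
      rw [hαhdef, norm_smul, norm_inv, norm_norm, inv_mul_cancel₀ hnormα.ne']
    have hpαh : ⟪p, αh⟫ = 0 := by rw [hαhdef, real_inner_smul_right, hpα]; ring
    have hbound : ∀ x ∈ P ∩ S, ‖x‖ = 1 ∧ |⟪αh, x⟫| ≤ c₀ * ‖x - p‖^2 := by
      rintro x ⟨hxP, hxS⟩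
      have hxn : ‖x‖ = 1 := mem_sphere_zero_iff_norm.mp hxS
      refine ⟨hxn, ?_⟩
      have hδ : ‖x - p‖^2 = 2*(1 - ⟪p, x⟫) := by
        rw [norm_sub_sq_real, hxn, hp1, real_inner_comm]; ring
      have hδ0 : 0 ≤ 1 - ⟪p, x⟫ := by
        have h1 := real_inner_le_norm p x
        rw [hp1, hxn, one_mul] at h1
        linarith
      have hxi' : ⟪a i', x⟫ < b i' := by
        have h1 : x ∈ ⋂ k, {x : EuclideanSpace ℝ (Fin (n+1)) | ⟪a k, x⟫ < b k} := hP ▸ hxP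
        exact Set.mem_iInter.mp h1 i'
      have hxj' : ⟪a j', x⟫ < b j' := by
        have h1 : x ∈ ⋂ k, {x : EuclideanSpace ℝ (Fin (n+1)) | ⟪a k, x⟫ < b k} := hP ▸ hxP
        exact Set.mem_iInter.mp h1 j'
      have h1 : ⟪α, x⟫ < b i' * (1 - ⟪p, x⟫) := by
        have e : ⟪α, x⟫ = ⟪a i', x⟫ - b i' * ⟪p, x⟫ := by
          rw [hα, inner_sub_left, real_inner_smul_left]
        nlinarith [hxi']
      have h2 : -(b j' * (1 - ⟪p, x⟫)) < s * ⟪α, x⟫ := by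
        have e : ⟪a j', x⟫ = b j' * ⟪p, x⟫ + ⟪β, x⟫ := by
          have e1 : ⟪β, x⟫ = ⟪a j', x⟫ - b j' * ⟪p, x⟫ := by
            rw [hβ, inner_sub_left, real_inner_smul_left]
          linarith
        rw [hβα x] at e
        nlinarith [hxj']
      have hmax : |⟪α, x⟫| ≤ max |b i'| (|b j'| / s) * (1 - ⟪p, x⟫) := by
        rw [abs_le]
        constructor
        · have hMj : (|b j'| / s) * s = |b j'| := div_mul_cancel₀ _ hs0.ne'
          have h5 : -(|b j'| * (1 - ⟪p, x⟫)) ≤ s * ⟪α, x⟫ := by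
            have h6 : b j' * (1 - ⟪p, x⟫) ≤ |b j'| * (1 - ⟪p, x⟫) :=
              mul_le_mul_of_nonneg_right (le_abs_self _) hδ0
            linarith [h2]
          have h7 : -((|b j'| / s) * (1 - ⟪p, x⟫)) ≤ ⟪α, x⟫ := by
            rw [← hMj] at h5
            nlinarith [h5, hs0]
          have h8 : (|b j'| / s) * (1 - ⟪p, x⟫) ≤ max |b i'| (|b j'| / s) * (1 - ⟪p, x⟫) :=
            mul_le_mul_of_nonneg_right (le_max_right _ _) hδ0
          linarith
        · have h6 : b i' * (1 - ⟪p, x⟫) ≤ |b i'| * (1 - ⟪p, x⟫) :=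
            mul_le_mul_of_nonneg_right (le_abs_self _) hδ0
          have h7 : |b i'| * (1 - ⟪p, x⟫) ≤ max |b i'| (|b j'| / s) * (1 - ⟪p, x⟫) :=
            mul_le_mul_of_nonneg_right (le_max_left _ _) hδ0
          linarith
      have e4 : ⟪αh, x⟫ = ‖α‖⁻¹ * ⟪α, x⟫ := by rw [hαhdef, real_inner_smul_left]
      have e5 : |⟪αh, x⟫| = ‖α‖⁻¹ * |⟪α, x⟫| := by
        rw [e4, abs_mul, abs_of_nonneg (inv_nonneg.mpr (norm_nonneg α))]
      rw [e5, hδ, hc₀def]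
      have e6 : max |b i'| (|b j'| / s) / (2 * ‖α‖) * (2 * (1 - ⟪p, x⟫))
          = ‖α‖⁻¹ * (max |b i'| (|b j'| / s) * (1 - ⟪p, x⟫)) := by
        field_simp
      rw [e6]
      exact mul_le_mul_of_nonneg_left hmax (inv_nonneg.mpr (norm_nonneg α))
    -- Step 4 : dimension count and conclusion
    have hON2 : Orthonormal ℝ ![p, αh] := by
      constructor
      · intro i2
        fin_cases i2
        · simpa using hp1
        · simpa using hαh1
      · intro i2 j2 hij
        fin_cases i2 <;> fin_cases j2
        · exact absurd rfl hij
        · simpa using hpαh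
        · simpa using (by rw [real_inner_comm]; exact hpαh : ⟪αh, p⟫ = 0)
        · exact absurd rfl hij
    have hn1 : 1 ≤ n := by
      have h2 := hON2.linearIndependent.fintype_card_le_finrank
      rw [finrank_euclideanSpace_fin] at h2
      simp at h2
      omega
    obtain ⟨m, rfl⟩ : ∃ m, n = m + 1 := ⟨n - 1, by omega⟩
    refine ⟨p, ⟨hpQ, hpS⟩, ?_⟩
    exact PolySphere.liminf_density_zero (P ∩ S) hp1 hαh1 hpαh hc₀0 hbound
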